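/- For every positive integer n, consider the random subgraph of the complete bipartite graph K_{n,n} in which each of the n² edges is included independently with probability 1/n. Then the expected size of a maximum matching of the random subgraph is at least n/e². -/

import Mathlib

open Finset

/-- The size of a maximum matching of the subgraph of `K_{n,n}` consisting of
the edges `e` with `ω e = true`: the largest cardinality of a set of realized
edges that are pairwise non-adjacent (no two share a left or right vertex). -/
def maxMatchingSize (n : ℕ) (ω : Fin n × Fin n → Bool) : ℕ :=
  Finset.univ.sup fun M : Finset (Fin n × Fin n) =>
    if (∀ e ∈ M, ω e) ∧ (∀ e ∈ M, ∀ f ∈ M, e ≠ f → e.1 ≠ f.1 ∧ e.2 ≠ f.2)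
    then M.card else 0

/-- `e` is a realized edge that is isolated in its row and column. -/
abbrev GoodEdge (n : ℕ) (e : Fin n × Fin n) (ω : Fin n × Fin n → Bool) : Prop :=
  ∀ f : Fin n × Fin n, (f.1 = e.1 ∨ f.2 = e.2) → ω f = decide (f = e)

lemma sum_pi_bool {ι : Type*} [Fintype ι] [DecidableEq ι] (g : ι → Bool → ℝ) :
    ∑ ω : ι → Bool, ∏ i, g i (ω i) = ∏ i, (g i true + g i false) := by
  have := Finset.prod_univ_sum (fun _ : ι => (univ : Finset Bool)) (fun i b => g i b)
  rw [Fintype.piFinset_univ] at this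
  rw [← this]
  simp

lemma card_adj_erase {n : ℕ} (e : Fin n × Fin n) :
    (((univ : Finset (Fin n × Fin n)).filter
      (fun f => f.1 = e.1 ∨ f.2 = e.2)).erase e).card = 2 * (n - 1) := by
  have hset : ((univ : Finset (Fin n × Fin n)).filter
      (fun f => f.1 = e.1 ∨ f.2 = e.2)).erase e
      = ({e.1} ×ˢ (univ.erase e.2)) ∪ ((univ.erase e.1) ×ˢ {e.2}) := by
    ext f
    simp only [mem_erase, mem_filter, mem_union, mem_product, mem_singleton, mem_univ,
      true_and, and_true]
    constructor
    · rintro ⟨hne, h | h⟩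
      · exact Or.inl ⟨h, fun h2 => hne (Prod.ext h h2)⟩
      · by_cases h1 : f.1 = e.1
        · exact Or.inl ⟨h1, fun h2 => hne (Prod.ext h1 h2)⟩
        · exact Or.inr ⟨h1, h⟩
    · rintro (⟨h1, h2⟩ | ⟨h1, h2⟩)
      · exact ⟨fun he => h2 (by rw [he]), Or.inl h1⟩
      · exact ⟨fun he => h1 (by rw [he]), Or.inr h2⟩
  have hdisj : Disjoint ({e.1} ×ˢ (univ.erase e.2)) ((univ.erase e.1) ×ˢ {e.2}) := by
    rw [Finset.disjoint_left]
    intro f hf1 hf2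
    simp only [mem_product, mem_singleton, mem_erase, mem_univ, and_true, true_and] at hf1 hf2
    exact hf2.1 hf1.1
  rw [hset, card_union_of_disjoint hdisj, card_product, card_product]
  simp only [card_singleton, Finset.card_erase_of_mem (mem_univ _), card_univ,
    Fintype.card_fin]
  omega

lemma per_edge {n : ℕ} (p q : ℝ) (hpq : p + q = 1) (e : Fin n × Fin n) :
    ∑ ω : Fin n × Fin n → Bool,
      (∏ f : Fin n × Fin n, if ω f then p else q) * (if GoodEdge n e ω then (1:ℝ) else 0)
    = p * q ^ (2 * (n - 1)) := by
  set g : (Fin n × Fin n) → Bool → ℝ := fun f b =>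
    (if b then p else q) *
      (if f.1 = e.1 ∨ f.2 = e.2 then (if b = decide (f = e) then 1 else 0) else 1)
    with hgdef
  have h1 : ∀ ω : Fin n × Fin n → Bool,
      (∏ f : Fin n × Fin n, if ω f then p else q) * (if GoodEdge n e ω then (1:ℝ) else 0)
      = ∏ f : Fin n × Fin n, g f (ω f) := by
    intro ω
    rw [hgdef]
    simp only []
    rw [Finset.prod_mul_distrib]
    congr 1
    by_cases hg : GoodEdge n e ω
    · rw [if_pos hg, Finset.prod_eq_one]
      intro f _
      by_cases hf : f.1 = e.1 ∨ f.2 = e.2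
      · rw [if_pos hf, if_pos (hg f hf)]
      · rw [if_neg hf]
    · rw [if_neg hg]
      rw [GoodEdge] at hg
      push_neg at hg
      obtain ⟨f, hf1, hf2⟩ := hg
      refine (Finset.prod_eq_zero (mem_univ f) ?_).symm
      rw [if_pos hf1, if_neg hf2]
  rw [Finset.sum_congr rfl (fun ω _ => h1 ω), sum_pi_bool]
  have h2 : ∀ f : Fin n × Fin n, g f true + g f false
      = if f.1 = e.1 ∨ f.2 = e.2 then (if f = e then p else q) else 1 := by
    intro f
    by_cases hfe : f = e
    · subst hfe
      simp [hgdef]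
    · by_cases hadj : f.1 = e.1 ∨ f.2 = e.2 <;>
        simp [hgdef, hfe, hadj, hpq]
  rw [Finset.prod_congr rfl (fun f _ => h2 f)]
  have hone : ∀ f ∈ (univ : Finset (Fin n × Fin n)),
      f ∉ (univ : Finset (Fin n × Fin n)).filter (fun f => f.1 = e.1 ∨ f.2 = e.2) →
      (if f.1 = e.1 ∨ f.2 = e.2 then (if f = e then p else q) else 1) = 1 := by
    intro f _ hf
    rw [if_neg (by simpa using hf)]
  rw [← Finset.prod_subset (Finset.subset_univ _) hone]
  have hemem : e ∈ (univ : Finset (Fin n × Fin n)).filter (fun f => f.1 = e.1 ∨ f.2 = e.2) :=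
    mem_filter.mpr ⟨mem_univ e, Or.inl rfl⟩
  rw [← Finset.mul_prod_erase _ _ hemem]
  congr 1
  · simp
  · rw [Finset.prod_congr rfl (fun f hf => ?_), Finset.prod_const, card_adj_erase]
    have hfe : f ≠ e := (mem_erase.mp hf).1
    have hmem : f.1 = e.1 ∨ f.2 = e.2 := (mem_filter.mp (mem_erase.mp hf).2).2
    rw [if_pos hmem, if_neg hfe]


lemma exp_neg_one_le {n : ℕ} (hn : 0 < n) :
    Real.exp (-1) ≤ (1 - 1 / (n:ℝ)) ^ (n - 1) := by
  rcases eq_or_lt_of_le (show 1 ≤ n from hn) with h1 | h1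
  · rw [← h1]
    simp only [Nat.cast_one]
    norm_num
  · set m : ℕ := n - 1 with hm
    have hm1 : 1 ≤ m := by omega
    have hmr : (0:ℝ) < (m:ℝ) := by exact_mod_cast hm1
    have hnm : (n:ℝ) = (m:ℝ) + 1 := by
      have h5 : m + 1 = n := by omega
      exact_mod_cast h5.symm
    have hkey : Real.exp (-(1/(m:ℝ))) ≤ 1 - 1/(n:ℝ) := by
      have h2 : 1 + 1/(m:ℝ) ≤ Real.exp (1/(m:ℝ)) := by
        have := Real.add_one_le_exp (1/(m:ℝ)); linarith
      have h3 : (0:ℝ) < 1 + 1/(m:ℝ) := by positivity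
      have h4 : (Real.exp (1/(m:ℝ)))⁻¹ ≤ (1 + 1/(m:ℝ))⁻¹ :=
        inv_anti₀ h3 h2
      rw [Real.exp_neg]
      calc (Real.exp (1/(m:ℝ)))⁻¹ ≤ (1 + 1/(m:ℝ))⁻¹ := h4
        _ = 1 - 1/(n:ℝ) := by
            rw [hnm]; field_simp; ring
    calc Real.exp (-1) = Real.exp (-(1/(m:ℝ))) ^ m := by
          rw [← Real.exp_nat_mul]
          congr 1
          field_simp
      _ ≤ (1 - 1/(n:ℝ)) ^ m := pow_le_pow_left₀ (Real.exp_pos _).le hkey m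

/-- For the random subgraph of `K_{n,n}` in which every edge
appears independently with probability `1/n`, the expected size of a maximum
matching is at least `n / e²`. -/
theorem expected_max_matching_Knn (n : ℕ) (hn : 0 < n) :
    (n : ℝ) / Real.exp 1 ^ 2 ≤
      ∑ ω : Fin n × Fin n → Bool,
        (∏ e : Fin n × Fin n, if ω e then (1 / n : ℝ) else 1 - 1 / n) *
          (maxMatchingSize n ω : ℝ) := by
  have hn1 : (1 : ℝ) ≤ (n : ℝ) := by exact_mod_cast hn
  have hn0 : (0 : ℝ) < (n : ℝ) := by positivity
  have hq0 : (0:ℝ) ≤ 1 - 1 / n := by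
    rw [sub_nonneg, div_le_one hn0]; exact hn1
  have hp0 : (0:ℝ) ≤ 1 / n := by positivity
  have hW : ∀ ω : Fin n × Fin n → Bool,
      0 ≤ ∏ e : Fin n × Fin n, if ω e then (1 / n : ℝ) else 1 - 1 / n :=
    fun ω => Finset.prod_nonneg fun e _ => by split <;> assumption
  -- step 1 : the good edges form a matching
  have step1 : ∀ ω : Fin n × Fin n → Bool,
      ((univ.filter (fun e => GoodEdge n e ω)).card : ℝ) ≤ (maxMatchingSize n ω : ℝ) := by
    intro ω
    have hsub : (univ.filter (fun e => GoodEdge n e ω)).card ≤ maxMatchingSize n ω := by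
      have h1 : ∀ e ∈ univ.filter (fun e => GoodEdge n e ω), ω e := by
        intro e he
        have := (mem_filter.mp he).2 e (Or.inl rfl)
        simpa using this
      have h2 : ∀ e ∈ univ.filter (fun e => GoodEdge n e ω),
          ∀ f ∈ univ.filter (fun e => GoodEdge n e ω), e ≠ f → e.1 ≠ f.1 ∧ e.2 ≠ f.2 := by
        intro e he f hf hef
        have hee := (mem_filter.mp he).2 e (Or.inl rfl)
        constructor
        · intro h
          have hgf := (mem_filter.mp hf).2 e (Or.inl h)
          rw [hee] at hgf
          simp only [decide_eq_decide] at hgf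
          exact hef (hgf.mp trivial)
        · intro h
          have hgf := (mem_filter.mp hf).2 e (Or.inr h)
          rw [hee] at hgf
          simp only [decide_eq_decide] at hgf
          exact hef (hgf.mp trivial)
      have hle := Finset.le_sup (f := fun M : Finset (Fin n × Fin n) =>
        if (∀ e ∈ M, ω e) ∧ (∀ e ∈ M, ∀ f ∈ M, e ≠ f → e.1 ≠ f.1 ∧ e.2 ≠ f.2)
        then M.card else 0) (mem_univ (univ.filter (fun e => GoodEdge n e ω)))
      rw [if_pos ⟨h1, h2⟩] at hle
      exact hle
    exact_mod_cast hsub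
  -- step 2: lower bound the expectation by the expected number of good edges
  have step2 :
      ∑ e : Fin n × Fin n, ∑ ω : Fin n × Fin n → Bool,
        (∏ f : Fin n × Fin n, if ω f then (1 / n : ℝ) else 1 - 1 / n) *
          (if GoodEdge n e ω then (1:ℝ) else 0)
      ≤ ∑ ω : Fin n × Fin n → Bool,
        (∏ e : Fin n × Fin n, if ω e then (1 / n : ℝ) else 1 - 1 / n) *
          (maxMatchingSize n ω : ℝ) := by
    rw [Finset.sum_comm]
    apply Finset.sum_le_sum
    intro ω _
    have hcard : ∑ e : Fin n × Fin n, (if GoodEdge n e ω then (1:ℝ) else 0)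
        = ((univ.filter (fun e => GoodEdge n e ω)).card : ℝ) := by
      rw [Finset.card_filter]
      push_cast
      exact Finset.sum_congr rfl fun e _ => by split <;> simp
    rw [← Finset.mul_sum, hcard]
    exact mul_le_mul_of_nonneg_left (step1 ω) (hW ω)
  -- step 3 : evaluate the lower bound
  have hpq : (1 / n : ℝ) + (1 - 1 / n) = 1 := by ring
  have step3 : ∑ e : Fin n × Fin n, ∑ ω : Fin n × Fin n → Bool,
        (∏ f : Fin n × Fin n, if ω f then (1 / n : ℝ) else 1 - 1 / n) *
          (if GoodEdge n e ω then (1:ℝ) else 0)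
      = (n:ℝ) * (1 - 1 / n) ^ (2 * (n - 1)) := by
    rw [Finset.sum_congr rfl fun e _ => per_edge (1 / n : ℝ) (1 - 1 / n) hpq e]
    rw [Finset.sum_const, card_univ]
    simp only [Fintype.card_prod, Fintype.card_fin, nsmul_eq_mul]
    push_cast
    field_simp
  -- step 4 : the analytic estimate
  have step4 : (n : ℝ) / Real.exp 1 ^ 2 ≤ (n:ℝ) * (1 - 1 / n) ^ (2 * (n - 1)) := by
    have hkey := exp_neg_one_le hn
    have h1 : Real.exp (-1) ^ 2 ≤ ((1 - 1 / (n:ℝ)) ^ (n - 1)) ^ 2 :=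
      pow_le_pow_left₀ (Real.exp_pos _).le hkey 2
    have h2 : ((1 - 1 / (n:ℝ)) ^ (n - 1)) ^ 2 = (1 - 1 / (n:ℝ)) ^ (2 * (n - 1)) := by
      rw [← pow_mul, mul_comm]
    have h3 : Real.exp (-1) ^ 2 = 1 / Real.exp 1 ^ 2 := by
      rw [Real.exp_neg]
      field_simp
    rw [div_eq_mul_one_div]
    rw [← h3, ← h2]
    exact mul_le_mul_of_nonneg_left h1 hn0.le
  calc (n : ℝ) / Real.exp 1 ^ 2 ≤ (n:ℝ) * (1 - 1 / n) ^ (2 * (n - 1)) := step4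
    _ = _ := step3.symm
    _ ≤ _ := step2
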